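/- For complex numbers p, q, z with |p| < 1, |q| < 1, z ≠ 0, the quadratic functional equation Γ_{p,q}(z) = Γ_{p,q²}(z) · Γ_{p,q²}(qz) holds. -/

import Mathlib

/-- The elliptic Gamma function
`Γ_{p,q}(z) = ∏_{i,j ≥ 0} (1 - p^{i+1} q^{j+1}/z)/(1 - p^i q^j z)`. -/
noncomputable def ellGamma (p q z : ℂ) : ℂ :=
  ∏' ij : ℕ × ℕ,
    ((1 - p ^ (ij.1 + 1) * q ^ (ij.2 + 1) / z) / (1 - p ^ ij.1 * q ^ ij.2 * z))

open Filter Complex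

lemma hasProd_zero_of_eq_zero {ι : Type*} {f : ι → ℂ} {b : ι} (hb : f b = 0) : HasProd f 0 := by
  classical
  have h : ∀ᶠ s : Finset ι in atTop, ∏ i ∈ s, f i = 0 :=
    eventually_atTop.2 ⟨{b}, fun s hs =>
      Finset.prod_eq_zero (Finset.singleton_subset_iff.mp hs) hb⟩
  exact Tendsto.congr' (h.mono fun s hs => hs.symm) tendsto_const_nhds

lemma mult_aux (u v x y : ℂ) (hx : ‖x‖ < 1) (hy : ‖y‖ < 1) :
    Multipliable (fun ij : ℕ × ℕ =>
      (1 - u * (x ^ ij.1 * y ^ ij.2)) / (1 - v * (x ^ ij.1 * y ^ ij.2))) := by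
  set f : ℕ × ℕ → ℂ := fun ij =>
    (1 - u * (x ^ ij.1 * y ^ ij.2)) / (1 - v * (x ^ ij.1 * y ^ ij.2)) with hf
  by_cases h0 : ∃ ij, f ij = 0
  · obtain ⟨b, hb⟩ := h0
    exact ⟨0, hasProd_zero_of_eq_zero hb⟩
  push_neg at h0
  have key : Summable fun ij : ℕ × ℕ => Complex.log (f ij) := by
    set K : ℝ := ‖u‖ + ‖v‖ + 1 with hK
    have hKpos : 0 < K := by positivity
    set c : ℕ × ℕ → ℝ := fun ij => ‖x‖ ^ ij.1 * ‖y‖ ^ ij.2 with hc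
    have hsc : Summable c :=
      (summable_geometric_of_lt_one (norm_nonneg x) hx).mul_of_nonneg
        (summable_geometric_of_lt_one (norm_nonneg y) hy)
        (fun i => by positivity) (fun j => by positivity)
    apply Summable.of_norm_bounded_eventually (g := fun ij => 3 * K * c ij) (hsc.mul_left _)
    have hev : ∀ᶠ ij in cofinite, c ij < 1 / (4 * K) :=
      hsc.tendsto_cofinite_zero.eventually_lt_const (by positivity)
    refine hev.mono fun ij hij => ?_
    set t : ℂ := x ^ ij.1 * y ^ ij.2 with ht
    have hct : ‖t‖ = c ij := by simp [ht, hc, norm_mul, norm_pow]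
    have hc0 : 0 ≤ c ij := by positivity
    have huK : ‖u‖ ≤ K := by rw [hK]; linarith [norm_nonneg v]
    have hvK : ‖v‖ ≤ K := by rw [hK]; linarith [norm_nonneg u]
    have hvt : ‖v * t‖ ≤ K * c ij := by
      rw [norm_mul, hct]; exact mul_le_mul_of_nonneg_right hvK hc0
    have hvt4 : ‖v * t‖ ≤ 1 / 4 := by
      refine hvt.trans ?_
      have := mul_le_mul_of_nonneg_left hij.le hKpos.le
      rw [mul_one_div] at this
      calc K * c ij ≤ K / (4 * K) := this
        _ ≤ 1 / 4 := by rw [div_le_div_iff₀ (by positivity) (by norm_num)]; nlinarith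
    have hden : (3:ℝ) / 4 ≤ ‖1 - v * t‖ := by
      have h1 := norm_sub_norm_le (1 : ℂ) (v * t)
      rw [norm_one] at h1
      linarith
    have hden0 : (1 : ℂ) - v * t ≠ 0 := by
      intro h
      rw [h, norm_zero] at hden; linarith
    have hfij : f ij = 1 + (v - u) * t / (1 - v * t) := by
      simp only [hf, ← ht]
      rw [div_eq_iff hden0, add_mul, div_mul_cancel₀ _ hden0]
      ring
    have hsub : ‖(v - u) * t / (1 - v * t)‖ ≤ 2 * K * c ij := by
      rw [norm_div, norm_mul, hct]
      rw [div_le_iff₀ (by linarith)]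
      have hvu : ‖v - u‖ ≤ K :=
        le_trans (norm_sub_le v u) (by rw [hK]; linarith)
      have h2 : ‖v - u‖ * c ij ≤ K * c ij := mul_le_mul_of_nonneg_right hvu hc0
      nlinarith [mul_le_mul_of_nonneg_left hden (by positivity : (0:ℝ) ≤ 2 * K * c ij),
        mul_nonneg hKpos.le hc0]
    have hhalf : ‖(v - u) * t / (1 - v * t)‖ ≤ 1 / 2 := by
      refine hsub.trans ?_
      have := mul_le_mul_of_nonneg_left hij.le (by positivity : (0:ℝ) ≤ 2 * K)
      rw [mul_one_div] at this
      calc 2 * K * c ij ≤ 2 * K / (4 * K) := this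
        _ ≤ 1 / 2 := by rw [div_le_div_iff₀ (by positivity) (by norm_num)]; nlinarith
    calc ‖Complex.log (f ij)‖ = ‖Complex.log (1 + (v - u) * t / (1 - v * t))‖ := by rw [hfij]
      _ ≤ 3 / 2 * ‖(v - u) * t / (1 - v * t)‖ := norm_log_one_add_half_le_self hhalf
      _ ≤ 3 / 2 * (2 * K * c ij) := by linarith
      _ = 3 * K * c ij := by ring
  exact Complex.multipliable_of_summable_log key

/-- The quadratic functional equation `Γ_{p,q}(z) = Γ_{p,q²}(z) Γ_{p,q²}(qz)`. -/
theorem ellGamma_quadratic_q (p q z : ℂ) (hp : ‖p‖ < 1) (hq : ‖q‖ < 1) (hz : z ≠ 0) :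
    ellGamma p q z = ellGamma p (q ^ 2) z * ellGamma p (q ^ 2) (q * z) := by
  by_cases hq0 : q = 0
  · subst hq0
    have h1 : ellGamma p (0 ^ 2 : ℂ) ((0 : ℂ) * z) = 1 := by
      rw [ellGamma, show ((0:ℂ)^2) = 0 by norm_num, zero_mul]
      have : ∀ ij : ℕ × ℕ,
          ((1 - p ^ (ij.1 + 1) * (0:ℂ) ^ (ij.2 + 1) / 0) / (1 - p ^ ij.1 * (0:ℂ) ^ ij.2 * 0))
          = 1 := by intro ij; simp
      rw [tprod_congr this, tprod_one]
    rw [h1, mul_one, show ((0:ℂ)^2) = 0 by norm_num]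
  -- main case
  have hq2 : ‖q ^ 2‖ < 1 := by
    rw [norm_pow]
    calc ‖q‖ ^ 2 ≤ ‖q‖ * 1 := by nlinarith [norm_nonneg q]
      _ < 1 := by simpa using hq
  set A : ℕ × ℕ → ℂ := fun ik => 1 - (p * q ^ 2 / z) * (p ^ ik.1 * (q ^ 2) ^ ik.2) with hA
  set B : ℕ × ℕ → ℂ := fun ik => 1 - z * (p ^ ik.1 * (q ^ 2) ^ ik.2) with hB
  set C : ℕ × ℕ → ℂ := fun ik => 1 - (p * q / z) * (p ^ ik.1 * (q ^ 2) ^ ik.2) with hC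
  set D : ℕ × ℕ → ℂ := fun ik => 1 - (q * z) * (p ^ ik.1 * (q ^ 2) ^ ik.2) with hD
  have hCB : Multipliable (fun ik => C ik / B ik) := mult_aux _ _ _ _ hp hq2
  have hAD : Multipliable (fun ik => A ik / D ik) := mult_aux _ _ _ _ hp hq2
  have hAB : Multipliable (fun ik => A ik / B ik) := mult_aux _ _ _ _ hp hq2
  have hCD : Multipliable (fun ik => C ik / D ik) := mult_aux _ _ _ _ hp hq2
  set F : ℕ × ℕ → ℂ := fun ij =>
    (1 - p ^ (ij.1 + 1) * q ^ (ij.2 + 1) / z) / (1 - p ^ ij.1 * q ^ ij.2 * z) with hF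
  classical
  set Fe : ℕ × ℕ → ℂ := fun ij => if Even ij.2 then F ij else 1 with hFe
  set Fo : ℕ × ℕ → ℂ := fun ij => if ¬ Even ij.2 then F ij else 1 with hFo
  have hg1 : Function.Injective (fun ik : ℕ × ℕ => (ik.1, 2 * ik.2)) := by
    intro a b h
    simp only [Prod.mk.injEq] at h
    exact Prod.ext h.1 (by omega)
  have hg2 : Function.Injective (fun ik : ℕ × ℕ => (ik.1, 2 * ik.2 + 1)) := by
    intro a b h
    simp only [Prod.mk.injEq] at h
    exact Prod.ext h.1 (by omega)
  have he1 : HasProd Fe (∏' ik, C ik / B ik) := by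
    rw [← hg1.hasProd_iff (f := Fe)]
    · have hcomp : (Fe ∘ fun ik : ℕ × ℕ => (ik.1, 2 * ik.2)) = fun ik => C ik / B ik := by
        funext ik
        simp only [Function.comp_apply, hFe, hF, hC, hB]
        rw [if_pos (even_two_mul ik.2)]
        congr 1
        · field_simp
          ring
        · ring
      rw [hcomp]
      exact hCB.hasProd
    · rintro ⟨i, j⟩ hij
      simp only [hFe]
      rw [if_neg]
      rintro ⟨k, hk⟩
      exact hij ⟨(i, k), by simp; omega⟩
  have he2 : HasProd Fo (∏' ik, A ik / D ik) := by
    rw [← hg2.hasProd_iff (f := Fo)]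
    · have hcomp : (Fo ∘ fun ik : ℕ × ℕ => (ik.1, 2 * ik.2 + 1)) = fun ik => A ik / D ik := by
        funext ik
        simp only [Function.comp_apply, hFo, hF, hA, hD]
        rw [if_pos (by simp [Nat.even_add_one])]
        congr 1
        · field_simp
          ring
        · ring
      rw [hcomp]
      exact hAD.hasProd
    · rintro ⟨i, j⟩ hij
      simp only [hFo]
      rw [if_neg]
      rw [not_not]
      rcases Nat.even_or_odd j with h | h
      · exact h
      · obtain ⟨k, hk⟩ := h
        exact absurd ⟨(i, k), by simp; omega⟩ hij
  have hFsplit : (fun ij => Fe ij * Fo ij) = F := by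
    funext ij
    simp only [hFe, hFo]
    by_cases h : Even ij.2
    · rw [if_pos h, if_neg (by simpa using h), mul_one]
    · rw [if_neg h, if_pos h, one_mul]
  have hprod : HasProd F ((∏' ik, C ik / B ik) * ∏' ik, A ik / D ik) := by
    rw [← hFsplit]
    exact he1.mul he2
  have h0 : ellGamma p q z = ∏' ij, F ij := rfl
  calc ellGamma p q z = (∏' ik, C ik / B ik) * ∏' ik, A ik / D ik := by
        rw [h0]; exact hprod.tprod_eq
    _ = ∏' ik, (C ik / B ik) * (A ik / D ik) := (hCB.tprod_mul hAD).symm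
    _ = ∏' ik, (A ik / B ik) * (C ik / D ik) := by
        refine tprod_congr fun ik => ?_
        rw [div_mul_div_comm, div_mul_div_comm, mul_comm (C ik)]
    _ = (∏' ik, A ik / B ik) * ∏' ik, C ik / D ik := hAB.tprod_mul hCD
    _ = ellGamma p (q ^ 2) z * ellGamma p (q ^ 2) (q * z) := by
        rw [ellGamma, ellGamma]
        congr 1
        · refine tprod_congr fun ik => ?_
          simp only [hA, hB]
          congr 1
          · field_simp
            ring
          · ring
        · refine tprod_congr fun ik => ?_
          simp only [hC, hD]
          congr 1
          · field_simp
            ring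
          · ring
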